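/- arXiv:1712.01225 — 2 statements merged into one kernel-verified Lean document; each statement's English description precedes it below -/
import Mathlib

section
/- Let H = (V,E) be a finite contextuality scenario and 𝒮 ⊆ V a set of pairwise exclusive events. If p is a quantum model on H (there is a finite-dimensional Hilbert space, density operator ρ, and projections P_v with ∑_{v∈e} P_v = 1 for all e ∈ E and p(v) = tr(P_v ρ)), then ∑_{v∈𝒮} p(v) ≤ 1. -/
open scoped ComplexOrder
open scoped Matrix

private lemma trace_ctm_nonneg {n : ℕ} (B : Matrix (Fin n) (Fin n) ℂ) :
    0 ≤ (Bᴴ * B).trace := by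
  rw [Matrix.trace]
  refine Finset.sum_nonneg fun j _ => ?_
  simp only [Matrix.diag_apply, Matrix.mul_apply, Matrix.conjTranspose_apply]
  exact Finset.sum_nonneg fun i _ => star_mul_self_nonneg _

private lemma eq_zero_of_trace_ctm {n : ℕ} (B : Matrix (Fin n) (Fin n) ℂ)
    (h : (Bᴴ * B).trace = 0) : B = 0 := by
  rw [Matrix.trace] at h
  have hnn : ∀ j ∈ Finset.univ, (0:ℂ) ≤ (Bᴴ * B).diag j := fun j _ => by
    simp only [Matrix.diag_apply, Matrix.mul_apply, Matrix.conjTranspose_apply]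
    exact Finset.sum_nonneg fun i _ => star_mul_self_nonneg _
  have h' := (Finset.sum_eq_zero_iff_of_nonneg hnn).mp h
  ext i j
  have hj := h' j (Finset.mem_univ j)
  simp only [Matrix.diag_apply, Matrix.mul_apply, Matrix.conjTranspose_apply] at hj
  have := (Finset.sum_eq_zero_iff_of_nonneg
    (fun i _ => star_mul_self_nonneg (B i j))).mp hj i (Finset.mem_univ i)
  simpa [mul_eq_zero] using this

private lemma trace_psd_nonneg {n : ℕ} {A : Matrix (Fin n) (Fin n) ℂ}
    (hA : A.PosSemidef) : 0 ≤ A.trace := by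
  rw [Matrix.trace]
  refine Finset.sum_nonneg fun i _ => ?_
  have := hA.dotProduct_mulVec_nonneg (Pi.single i 1)
  simpa [dotProduct, Matrix.mulVec, Pi.single_apply, apply_ite star,
    mul_ite, ite_mul, Finset.sum_ite_eq, Finset.sum_ite_eq'] using this

open scoped MatrixOrder in
private lemma trace_mul_psd_nonneg {n : ℕ} {A B : Matrix (Fin n) (Fin n) ℂ}
    (hA : A.PosSemidef) (hB : B.PosSemidef) : 0 ≤ (A * B).trace := by
  have hs : (CFC.sqrt B) * (CFC.sqrt B) = B := CFC.sqrt_mul_sqrt_self B hB.nonneg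
  have hconj : ((CFC.sqrt B) * A * (CFC.sqrt B)).PosSemidef := by
    have := hA.mul_mul_conjTranspose_same (CFC.sqrt B)
    rwa [(Matrix.nonneg_iff_posSemidef.mp (CFC.sqrt_nonneg B)).isHermitian.eq] at this
  have heq : (A * B).trace = ((CFC.sqrt B) * A * (CFC.sqrt B)).trace := by
    conv_lhs => rw [← hs]
    rw [← Matrix.mul_assoc, Matrix.trace_mul_cycle]
  rw [heq]
  exact trace_psd_nonneg hconj

private lemma sum_psd {n : ℕ} {ι : Type*} (s : Finset ι) (f : ι → Matrix (Fin n) (Fin n) ℂ)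
    (h : ∀ i ∈ s, (f i).PosSemidef) : (∑ i ∈ s, f i).PosSemidef := by
  classical
  induction s using Finset.induction with
  | empty => simpa using Matrix.PosSemidef.zero
  | @insert a s hx ih =>
    rw [Finset.sum_insert hx]
    exact (h _ (Finset.mem_insert_self _ _)).add
      (ih fun i hi => h i (Finset.mem_insert_of_mem hi))

/-- Quantum models satisfy all CE inequalities. -/
theorem quantum_model_satisfies_CE {V : Type*} [Fintype V] [DecidableEq V]
    (E : Finset (Finset V)) (S : Finset V)
    (hexc : ∀ u ∈ S, ∀ v ∈ S, u ≠ v → ∃ e ∈ E, u ∈ e ∧ v ∈ e)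
    (n : ℕ) (ρ : Matrix (Fin n) (Fin n) ℂ)
    (hρ : ρ.PosSemidef) (htr : ρ.trace = 1)
    (P : V → Matrix (Fin n) (Fin n) ℂ)
    (hPh : ∀ v, (P v).IsHermitian) (hP2 : ∀ v, P v * P v = P v)
    (hnorm : ∀ e ∈ E, ∑ v ∈ e, P v = 1)
    (p : V → ℝ) (hp : ∀ v, (p v : ℂ) = (P v * ρ).trace) :
    ∑ v ∈ S, p v ≤ 1 := by
  have hPsd : ∀ v, (P v).PosSemidef := fun v => by
    have h : (P v)ᴴ * P v = P v := by rw [(hPh v).eq, hP2 v]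
    rw [← h]
    exact Matrix.posSemidef_conjTranspose_mul_self _
  -- orthogonality of distinct projections in S
  have horth : ∀ u ∈ S, ∀ v ∈ S, u ≠ v → P u * P v = 0 := by
    intro u hu v hv huv
    obtain ⟨e, he, hue, hve⟩ := hexc u hu v hv huv
    set R := ∑ w ∈ (e.erase u).erase v, P w with hR
    have hve' : v ∈ e.erase u := Finset.mem_erase.mpr ⟨Ne.symm huv, hve⟩
    have hone : P u + (P v + R) = 1 := by
      rw [hR, Finset.add_sum_erase _ _ hve', Finset.add_sum_erase _ _ hue]
      exact hnorm e he
    have h0 : P v + R = 1 - P u := eq_sub_of_add_eq' hone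
    have hRpsd : R.PosSemidef := sum_psd _ _ fun i _ => hPsd i
    have hkey : P u * P v * P u + P u * R * P u = 0 := by
      calc P u * P v * P u + P u * R * P u = P u * (P v + R) * P u := by noncomm_ring
      _ = P u * (1 - P u) * P u := by rw [h0]
      _ = P u * P u - P u * P u * P u := by noncomm_ring
      _ = 0 := by simp [hP2 u]
    have hfac : P u * P v * P u = (P v * P u)ᴴ * (P v * P u) := by
      rw [Matrix.conjTranspose_mul, (hPh u).eq, (hPh v).eq]
      simp only [← Matrix.mul_assoc]
      rw [Matrix.mul_assoc (P u) (P v) (P v), hP2 v]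
    have hQpsd : (P u * R * P u).PosSemidef := by
      have := hRpsd.mul_mul_conjTranspose_same (P u)
      rwa [(hPh u).eq] at this
    have h3 : ((P v * P u)ᴴ * (P v * P u)).trace + (P u * R * P u).trace = 0 := by
      rw [← Matrix.trace_add, ← hfac, hkey, Matrix.trace_zero]
    have htr0 : ((P v * P u)ᴴ * (P v * P u)).trace = 0 := by
      refine le_antisymm ?_ (trace_ctm_nonneg _)
      rw [eq_neg_of_add_eq_zero_left h3]
      exact neg_nonpos_of_nonneg (trace_psd_nonneg hQpsd)
    have hz := eq_zero_of_trace_ctm _ htr0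
    calc P u * P v = ((P v)ᴴ * (P u)ᴴ)ᴴ := by
          rw [Matrix.conjTranspose_mul, Matrix.conjTranspose_conjTranspose,
            Matrix.conjTranspose_conjTranspose]
    _ = 0 := by rw [(hPh u).eq, (hPh v).eq, hz]; simp
  set Q := ∑ v ∈ S, P v with hQ
  have hQh : Q.IsHermitian := by
    rw [hQ, Matrix.IsHermitian, Matrix.conjTranspose_sum]
    exact Finset.sum_congr rfl fun v _ => (hPh v).eq
  have hQ2 : Q * Q = Q := by
    rw [hQ, Finset.sum_mul_sum]
    rw [Finset.sum_congr rfl fun u hu => Finset.sum_eq_single_of_mem u hu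
      (fun v hv hvu => horth u hu v hv (Ne.symm hvu))]
    exact Finset.sum_congr rfl fun u _ => hP2 u
  have h1Q : (1 - Q).PosSemidef := by
    have hh : (1 - Q)ᴴ = 1 - Q := by
      rw [Matrix.conjTranspose_sub, hQh.eq, Matrix.conjTranspose_one]
    have hidem : (1 - Q) * (1 - Q) = 1 - Q := by
      have : (1 - Q) * (1 - Q) = 1 - Q - Q + Q * Q := by noncomm_ring
      rw [this, hQ2]; abel
    have heq : (1 : Matrix (Fin n) (Fin n) ℂ) - Q = (1 - Q)ᴴ * (1 - Q) := by
      rw [hh, hidem]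
    rw [heq]
    exact Matrix.posSemidef_conjTranspose_mul_self _
  have hfinal : ((∑ v ∈ S, p v : ℝ) : ℂ) ≤ 1 := by
    have hsum : ((∑ v ∈ S, p v : ℝ) : ℂ) = (Q * ρ).trace := by
      push_cast
      rw [Finset.sum_congr rfl fun v _ => hp v, hQ, Finset.sum_mul, Matrix.trace_sum]
    have hpos := trace_mul_psd_nonneg h1Q hρ
    rw [Matrix.sub_mul, Matrix.one_mul, Matrix.trace_sub, htr, sub_nonneg] at hpos
    rw [hsum]; exact hpos
  exact_mod_cast hfinal
end

section
/- In the (4,2) symmetric marginal scenario with binary outcomes, every classical model satisfies the pentagonal inequality: −⟨X₁X₂⟩ − ⟨X₁X₃⟩ + ⟨X₁X₄⟩ + ⟨X₁⟩ − ⟨X₂X₃⟩ + ⟨X₂X₄⟩ + ⟨X₂⟩ + ⟨X₃X₄⟩ + ⟨X₃⟩ − ⟨X₄⟩ ≤ 2. Equivalently, for every function x : {1,2,3,4} → {−1,+1}, one has −x₁x₂ − x₁x₃ + x₁x₄ + x₁ − x₂x₃ + x₂x₄ + x₂ + x₃x₄ + x₃ − x₄ ≤ 2. -/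
/-- Deterministic (hence, by convexity, all classical) models in the (4,2)
symmetric marginal scenario satisfy the pentagonal inequality. -/
theorem pentagonal_inequality_classical (x : Fin 4 → ℤ)
    (hx : ∀ i, x i = 1 ∨ x i = -1) :
    -(x 0 * x 1) - x 0 * x 2 + x 0 * x 3 + x 0 - x 1 * x 2 + x 1 * x 3 + x 1
      + x 2 * x 3 + x 2 - x 3 ≤ 2 := by
  rcases hx 0 with h0 | h0 <;> rcases hx 1 with h1 | h1 <;>
    rcases hx 2 with h2 | h2 <;> rcases hx 3 with h3 | h3 <;>
    simp [h0, h1, h2, h3]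
end
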